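/- Smooth min-entropy bounded by smooth max-entropy (Lemma 8, exact form): Let ρ be a normalized state on A⊗B (finite-dimensional systems) and α, β ≥ 0 with α + β < π/2. Then H_min^{sin α}(A|B)_ρ ≤ H_max^{sin β}(A|B)_ρ + log₂(1/cos²(α+β)). -/

import Mathlib

open scoped Kronecker ComplexOrder Classical
open Matrix

noncomputable section
namespace Paper

/-- A subnormalized state: positive semidefinite with trace at most one. -/
def IsSubState {A : Type*} [Fintype A] (ρ : Matrix A A ℂ) : Prop :=
  ρ.PosSemidef ∧ ρ.trace.re ≤ 1

/-- A normalized state: positive semidefinite with trace one. -/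
def IsState {A : Type*} [Fintype A] (ρ : Matrix A A ℂ) : Prop :=
  ρ.PosSemidef ∧ ρ.trace = 1

/-- The Löwner order: `ρ ≤ σ` iff `σ - ρ` is positive semidefinite. -/
def LoewnerLE {A : Type*} [Fintype A] (ρ σ : Matrix A A ℂ) : Prop :=
  (σ - ρ).PosSemidef

/-- Square root of a positive semidefinite matrix (junk value `0` otherwise). -/
def matSqrt {A : Type*} [Fintype A] [DecidableEq A] (M : Matrix A A ℂ) : Matrix A A ℂ :=
  if h : M.PosSemidef then
    (h.1.eigenvectorUnitary : Matrix A A ℂ) *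
      Matrix.diagonal (fun i => ((Real.sqrt (h.1.eigenvalues i) : ℝ) : ℂ)) *
      star (h.1.eigenvectorUnitary : Matrix A A ℂ)
  else 0

/-- Fidelity `F(ρ,σ) = tr √(√ρ σ √ρ)`. -/
def fid {A : Type*} [Fintype A] [DecidableEq A] (ρ σ : Matrix A A ℂ) : ℝ :=
  ((matSqrt (matSqrt ρ * σ * matSqrt ρ)).trace).re

/-- Generalized fidelity of subnormalized states. -/
def genFid {A : Type*} [Fintype A] [DecidableEq A] (ρ σ : Matrix A A ℂ) : ℝ :=
  fid ρ σ + Real.sqrt ((1 - ρ.trace.re) * (1 - σ.trace.re))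

/-- Purified distance `P(ρ,σ) = √(1 - F̄(ρ,σ)²)`. -/
def pDist {A : Type*} [Fintype A] [DecidableEq A] (ρ σ : Matrix A A ℂ) : ℝ :=
  Real.sqrt (1 - (genFid ρ σ)^2)

/-- Conditional min-entropy `H_min(A|B)_ρ` for a bipartite (sub)state on `A ⊗ B`. -/
def Hmin {A B : Type*} [Fintype A] [DecidableEq A] [Fintype B] [DecidableEq B]
    (ρ : Matrix (A × B) (A × B) ℂ) : ℝ :=
  sSup {l : ℝ | ∃ σ : Matrix B B ℂ, IsState σ ∧
    LoewnerLE ρ (((2:ℝ) ^ (-l)) • ((1 : Matrix A A ℂ) ⊗ₖ σ))}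

/-- Conditional max-entropy `H_max(A|B)_ρ = 2 log₂ sup_σ F(ρ, 1⊗σ)`. -/
def Hmax {A B : Type*} [Fintype A] [DecidableEq A] [Fintype B] [DecidableEq B]
    (ρ : Matrix (A × B) (A × B) ℂ) : ℝ :=
  2 * Real.logb 2
    (sSup {f : ℝ | ∃ σ : Matrix B B ℂ, IsState σ ∧ f = fid ρ ((1 : Matrix A A ℂ) ⊗ₖ σ)})

/-- Smooth conditional min-entropy. -/
def sHmin {A B : Type*} [Fintype A] [DecidableEq A] [Fintype B] [DecidableEq B]
    (ε : ℝ) (ρ : Matrix (A × B) (A × B) ℂ) : ℝ :=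
  sSup {h : ℝ | ∃ ρ' : Matrix (A × B) (A × B) ℂ,
    IsSubState ρ' ∧ pDist ρ' ρ ≤ ε ∧ h = Hmin ρ'}

/-- Smooth conditional max-entropy. -/
def sHmax {A B : Type*} [Fintype A] [DecidableEq A] [Fintype B] [DecidableEq B]
    (ε : ℝ) (ρ : Matrix (A × B) (A × B) ℂ) : ℝ :=
  sInf {h : ℝ | ∃ ρ' : Matrix (A × B) (A × B) ℂ,
    IsSubState ρ' ∧ pDist ρ' ρ ≤ ε ∧ h = Hmax ρ'}

/-- Partial trace over the second tensor factor. -/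
def ptraceSnd {A B : Type*} [Fintype B] (ρ : Matrix (A × B) (A × B) ℂ) : Matrix A A ℂ :=
  Matrix.of fun a a' => ∑ b, ρ (a, b) (a', b)

/-- Partial trace over the first tensor factor. -/
def ptraceFst {A B : Type*} [Fintype A] (ρ : Matrix (A × B) (A × B) ℂ) : Matrix B B ℂ :=
  Matrix.of fun b b' => ∑ a, ρ (a, b) (a, b')

/-- Von Neumann entropy (base-2), via eigenvalues of a Hermitian matrix. -/
def vN {A : Type*} [Fintype A] [DecidableEq A] (ρ : Matrix A A ℂ) : ℝ :=
  if h : ρ.IsHermitian then -∑ i, (h.eigenvalues i) * Real.logb 2 (h.eigenvalues i) else 0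

/-- Conditional von Neumann entropy `S(A|B)_ρ = S(ρ) - S(ρ^B)`. -/
def condEnt {A B : Type*} [Fintype A] [DecidableEq A] [Fintype B] [DecidableEq B]
    (ρ : Matrix (A × B) (A × B) ℂ) : ℝ :=
  vN ρ - vN (ptraceFst ρ)

/-- The n-fold tensor power of a bipartite state, as a state on `A^n ⊗ B^n`. -/
def powState {A B : Type*} (ρ : Matrix (A × B) (A × B) ℂ) (n : ℕ) :
    Matrix ((Fin n → A) × (Fin n → B)) ((Fin n → A) × (Fin n → B)) ℂ :=
  Matrix.of fun p q => ∏ i, ρ (p.1 i, p.2 i) (q.1 i, q.2 i)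



section Wiretap

variable {𝓧 B E F : Type*} [Fintype 𝓧] [DecidableEq 𝓧]
  [Fintype B] [DecidableEq B] [Fintype E] [DecidableEq E] [Fintype F] [DecidableEq F]

/-- The i.i.d. output state `ρ_{x^n}^{B^n E^n}` on `B^n ⊗ E^n` for input word `xs`. -/
def rhoWord (W : 𝓧 → Matrix (B × E) (B × E) ℂ) {n : ℕ} (xs : Fin n → 𝓧) :
    Matrix ((Fin n → B) × (Fin n → E)) ((Fin n → B) × (Fin n → E)) ℂ :=
  Matrix.of fun p q => ∏ i, W (xs i) (p.1 i, p.2 i) (q.1 i, q.2 i)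

/-- `tr_B [ρ (D ⊗ 1)]` for a bipartite operator `ρ` on `B⊗E` and `D` on `B`. -/
def condOut {BB EE : Type*} [Fintype BB] [Fintype EE]
    (ρ : Matrix (BB × EE) (BB × EE) ℂ) (D : Matrix BB BB ℂ) : Matrix EE EE ℂ :=
  Matrix.of fun e e' => ∑ b, ∑ b', ρ (b, e) (b', e') * D b' b

/-- The reduced state `ρ^{UÛ}` of the code. -/
def rhoUU (W : 𝓧 → Matrix (B × E) (B × E) ℂ) (n M : ℕ)
    (Enc : Fin M → (Fin n → 𝓧) → ℝ)
    (D : Fin M → Matrix (Fin n → B) (Fin n → B) ℂ) :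
    Matrix (Fin M × Fin M) (Fin M × Fin M) ℂ :=
  Matrix.of fun p q => if p = q then
    (M : ℂ)⁻¹ * ∑ xs, (Enc p.1 xs : ℂ) * (condOut (rhoWord W xs) (D p.2)).trace
  else 0

/-- The reduced state `ρ^{U E^n}` of the code. -/
def rhoUE (W : 𝓧 → Matrix (B × E) (B × E) ℂ) (n M : ℕ)
    (Enc : Fin M → (Fin n → 𝓧) → ℝ) :
    Matrix (Fin M × (Fin n → E)) (Fin M × (Fin n → E)) ℂ :=
  Matrix.of fun p q => if p.1 = q.1 then
    (M : ℂ)⁻¹ * ∑ xs, (Enc p.1 xs : ℂ) * (ptraceFst (rhoWord W xs)) p.2 q.2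
  else 0

/-- The maximally correlated state `Δ^{UÛ} = (1/M) ∑_u |u⟩⟨u| ⊗ |u⟩⟨u|`. -/
def DeltaUU (M : ℕ) : Matrix (Fin M × Fin M) (Fin M × Fin M) ℂ :=
  Matrix.of fun p q => if p = q ∧ p.1 = p.2 then (M : ℂ)⁻¹ else 0

/-- `Δ^U ⊗ σ`, with `Δ^U` the maximally mixed state on `Fin M`. -/
def DeltaTensor {EE : Type*} (M : ℕ) (σ : Matrix EE EE ℂ) :
    Matrix (Fin M × EE) (Fin M × EE) ℂ :=
  Matrix.of fun p q => if p.1 = q.1 then (M : ℂ)⁻¹ * σ p.2 q.2 else 0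

/-- An `n`-block wiretap code with `M` messages, transmission error `ε`, privacy error `δ`. -/
def IsCode (W : 𝓧 → Matrix (B × E) (B × E) ℂ) (n M : ℕ) (ε δ : ℝ)
    (Enc : Fin M → (Fin n → 𝓧) → ℝ)
    (D : Fin M → Matrix (Fin n → B) (Fin n → B) ℂ) : Prop :=
  (∀ u, (∀ xs, 0 ≤ Enc u xs) ∧ (∑ xs, Enc u xs) = 1) ∧
  (∀ u, (D u).PosSemidef) ∧ (∑ u, D u) = 1 ∧
  pDist (rhoUU W n M Enc D) (DeltaUU M) ≤ ε ∧
  (∃ σ : Matrix (Fin n → E) (Fin n → E) ℂ, IsState σ ∧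
    pDist (rhoUE W n M Enc) (DeltaTensor M σ) ≤ δ)

/-- `M(n,ε,δ)`: the largest number of messages of an `n`-block code with errors `ε, δ`. -/
def Mmax (W : 𝓧 → Matrix (B × E) (B × E) ℂ) (n : ℕ) (ε δ : ℝ) : ℕ :=
  sSup {M : ℕ | ∃ (Enc : Fin M → (Fin n → 𝓧) → ℝ)
    (D : Fin M → Matrix (Fin n → B) (Fin n → B) ℂ), IsCode W n M ε δ Enc D}

/-- Conditional mutual information `I(X:F|E')` of a state on `X ⊗ ((E'⊗F) ⊗ E)`
(the trailing system `E` is traced out). -/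
def cmi3 {X E F E2 : Type*} [Fintype X] [DecidableEq X] [Fintype E] [DecidableEq E]
    [Fintype F] [DecidableEq F] [Fintype E2]
    (σ : Matrix (X × (E × F) × E2) (X × (E × F) × E2) ℂ) : ℝ :=
  vN (Matrix.of fun (p q : X × E) => ∑ f, ∑ e2, σ (p.1, (p.2, f), e2) (q.1, (q.2, f), e2))
  + vN (Matrix.of fun (p q : E × F) => ∑ x, ∑ e2, σ (x, p, e2) (x, q, e2))
  - vN (Matrix.of fun (e e' : E) => ∑ x, ∑ f, ∑ e2, σ (x, (e, f), e2) (x, (e', f), e2))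
  - vN (Matrix.of fun (p q : X × E × F) => ∑ e2, σ (p.1, p.2, e2) (q.1, q.2, e2))

/-- The state `ρ^{X E' F E} = ∑_x P(x) |x⟩⟨x| ⊗ (V⊗1) ρ_x^{BE} (V⊗1)†`. -/
def rhoXEFE (W : 𝓧 → Matrix (B × E) (B × E) ℂ) (V : Matrix (E × F) B ℂ) (P : 𝓧 → ℝ) :
    Matrix (𝓧 × (E × F) × E) (𝓧 × (E × F) × E) ℂ :=
  Matrix.of fun p q => if p.1 = q.1 then
    (P p.1 : ℂ) *
      ((V ⊗ₖ (1 : Matrix E E ℂ)) * W p.1 * (V ⊗ₖ (1 : Matrix E E ℂ))ᴴ) p.2 q.2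
  else 0

/-- `P*(W) = max_{P_X} I(X:F|E')`. -/
def Pstar (W : 𝓧 → Matrix (B × E) (B × E) ℂ) (V : Matrix (E × F) B ℂ) : ℝ :=
  sSup {r : ℝ | ∃ P : 𝓧 → ℝ, (∀ x, 0 ≤ P x) ∧ (∑ x, P x) = 1 ∧ r = cmi3 (rhoXEFE W V P)}

/-- Degradedness of the wiretap channel `W`, witnessed by a Stinespring
isometry `V : B → E' ⊗ F` of the degrading map. -/
def DegradedVia (W : 𝓧 → Matrix (B × E) (B × E) ℂ) (V : Matrix (E × F) B ℂ) : Prop :=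
  Vᴴ * V = 1 ∧ ∀ x, ptraceSnd (V * ptraceSnd (W x) * Vᴴ) = ptraceFst (W x)

end Wiretap


section Extras

/-- `id_A ⊗ 𝒟` applied to a bipartite operator, for `𝒟` given by Kraus operators `K i`. -/
def idChan {A B C ι : Type*} [Fintype ι] [Fintype B]
    (K : ι → Matrix C B ℂ) (ρ : Matrix (A × B) (A × B) ℂ) : Matrix (A × C) (A × C) ℂ :=
  Matrix.of fun p q => ∑ i, ∑ b, ∑ b', K i p.2 b * ρ (p.1, b) (q.1, b') * star (K i q.2 b')

/-- Moore–Penrose pseudoinverse of a Hermitian matrix (junk value `0` otherwise). -/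
def pinv {A : Type*} [Fintype A] [DecidableEq A] (M : Matrix A A ℂ) : Matrix A A ℂ :=
  if h : M.IsHermitian then
    (h.eigenvectorUnitary : Matrix A A ℂ) *
      Matrix.diagonal (fun i => ((h.eigenvalues i)⁻¹ : ℂ)) *
      star (h.eigenvectorUnitary : Matrix A A ℂ)
  else 0

/-- Operator norm of a matrix, acting on Euclidean space. -/
def opNorm {A : Type*} [Fintype A] [DecidableEq A] (M : Matrix A A ℂ) : ℝ :=
  ‖Matrix.toEuclideanCLM (𝕜 := ℂ) M‖

/-- The type class `τ(P₀)` of length-`n` words of type `P₀`. -/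
def typeClass {𝓧 : Type*} [Fintype 𝓧] [DecidableEq 𝓧] (n : ℕ) (P0 : 𝓧 → ℝ) :
    Set (Fin n → 𝓧) :=
  {xs | ∀ x, ((Finset.univ.filter fun i => xs i = x).card : ℝ) = n * P0 x}

/-- Holevo capacity of the cq channel `x ↦ Wb x`. -/
def holevoCap {𝓧 B : Type*} [Fintype 𝓧] [Fintype B] [DecidableEq B]
    (Wb : 𝓧 → Matrix B B ℂ) : ℝ :=
  sSup {r : ℝ | ∃ P : 𝓧 → ℝ, (∀ x, 0 ≤ P x) ∧ (∑ x, P x) = 1 ∧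
    r = vN (∑ x, (P x : ℝ) • Wb x) - ∑ x, P x * vN (Wb x)}

end Extras

-- AUXSTART
section Aux
variable {n : Type*} [Fintype n] [DecidableEq n] {M : Matrix n n ℂ}

/-- Spectral functional calculus helper. -/
noncomputable def specFun (hM : M.IsHermitian) (f : ℝ → ℝ) : Matrix n n ℂ :=
  (hM.eigenvectorUnitary : Matrix n n ℂ) *
    Matrix.diagonal (fun i => (f (hM.eigenvalues i) : ℂ)) *
    (star hM.eigenvectorUnitary : Matrix n n ℂ)

variable (hM : M.IsHermitian)

lemma star_mul_self_eigU : (star hM.eigenvectorUnitary : Matrix n n ℂ) *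
    (hM.eigenvectorUnitary : Matrix n n ℂ) = 1 := by
  have := hM.eigenvectorUnitary.2
  rw [Matrix.mem_unitaryGroup_iff'] at this
  exact this

lemma mul_star_self_eigU : (hM.eigenvectorUnitary : Matrix n n ℂ) *
    (star hM.eigenvectorUnitary : Matrix n n ℂ) = 1 := by
  have := hM.eigenvectorUnitary.2
  rw [Matrix.mem_unitaryGroup_iff] at this
  exact this

lemma cancel_eigU (X : Matrix n n ℂ) : (star hM.eigenvectorUnitary : Matrix n n ℂ) *
    ((hM.eigenvectorUnitary : Matrix n n ℂ) * X) = X := by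
  rw [← Matrix.mul_assoc, star_mul_self_eigU hM, Matrix.one_mul]

lemma specFun_mul (f g : ℝ → ℝ) :
    specFun hM f * specFun hM g = specFun hM (fun x => f x * g x) := by
  unfold specFun
  simp only [Matrix.mul_assoc]
  rw [cancel_eigU hM, ← Matrix.mul_assoc (Matrix.diagonal _), Matrix.diagonal_mul_diagonal]
  push_cast
  rfl

lemma specFun_congr {f g : ℝ → ℝ} (h : ∀ i, f (hM.eigenvalues i) = g (hM.eigenvalues i)) :
    specFun hM f = specFun hM g := by
  unfold specFun
  congr 2
  exact congrArg _ (funext fun i => by rw [h i])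

lemma specFun_id : specFun hM (fun x => x) = M := by
  simpa [specFun, Function.comp_def] using hM.spectral_theorem.symm

lemma specFun_one : specFun hM (fun _ => 1) = 1 := by
  simp [specFun, mul_star_self_eigU hM]

lemma specFun_zero : specFun hM (fun _ => 0) = 0 := by
  unfold specFun
  simp only [Complex.ofReal_zero, Matrix.diagonal_zero, Matrix.mul_zero, Matrix.zero_mul]

lemma specFun_sub (f g : ℝ → ℝ) :
    specFun hM f - specFun hM g = specFun hM (fun x => f x - g x) := by
  unfold specFun
  rw [← Matrix.sub_mul, ← Matrix.mul_sub, Matrix.diagonal_sub]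
  push_cast
  rfl

lemma diag_conjT (f : ℝ → ℝ) : (Matrix.diagonal (fun i => (f (hM.eigenvalues i) : ℂ)))ᴴ
    = Matrix.diagonal (fun i => (f (hM.eigenvalues i) : ℂ)) := by
  ext i j
  simp only [Matrix.conjTranspose_apply, Matrix.diagonal_apply]
  by_cases h : i = j
  · subst h; simp [Complex.conj_ofReal]
  · rw [if_neg h, if_neg (fun hji => h (hji.symm)), star_zero]

lemma specFun_isHermitian (f : ℝ → ℝ) : (specFun hM f).IsHermitian := by
  unfold specFun Matrix.IsHermitian
  rw [Matrix.conjTranspose_mul, Matrix.conjTranspose_mul]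
  simp only [Matrix.star_eq_conjTranspose, Matrix.conjTranspose_conjTranspose, diag_conjT hM,
    Matrix.mul_assoc]

lemma specFun_psd {f : ℝ → ℝ} (h : ∀ i, 0 ≤ f (hM.eigenvalues i)) :
    (specFun hM f).PosSemidef := by
  unfold specFun
  rw [Matrix.star_eq_conjTranspose]
  exact (Matrix.posSemidef_diagonal_iff.mpr fun i => by
    simpa using Complex.zero_le_real.mpr (h i)).mul_mul_conjTranspose_same _

lemma specFun_trace (f : ℝ → ℝ) :
    (specFun hM f).trace = ((∑ i, f (hM.eigenvalues i) : ℝ) : ℂ) := by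
  unfold specFun
  rw [Matrix.trace_mul_cycle, star_mul_self_eigU hM, Matrix.one_mul, Matrix.trace_diagonal]
  push_cast
  rfl

lemma matSqrt_eq (h : M.PosSemidef) : matSqrt M = specFun h.1 Real.sqrt := by
  rw [matSqrt, dif_pos h]
  rfl

lemma matSqrt_psd (h : M.PosSemidef) : (matSqrt M).PosSemidef := by
  rw [matSqrt_eq h]; exact specFun_psd h.1 (fun i => Real.sqrt_nonneg _)

lemma matSqrt_herm (h : M.PosSemidef) : (matSqrt M).IsHermitian := (matSqrt_psd h).1

open scoped MatrixOrder in
lemma matSqrt_eq_cfc (h : M.PosSemidef) : matSqrt M = CFC.sqrt M := by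
  rw [CFC.sqrt_eq_cfc, cfc_nnreal_eq_real _ M h.nonneg, h.1.cfc_eq, matSqrt, dif_pos h]
  simp only [IsHermitian.cfc, Unitary.conjStarAlgAut_apply]
  congr 3
  funext i
  simp [Function.comp_def, h.eigenvalues_nonneg i]

open scoped MatrixOrder in
lemma matSqrt_mul_self (h : M.PosSemidef) : matSqrt M * matSqrt M = M := by
  rw [matSqrt_eq_cfc h]; exact CFC.sqrt_mul_sqrt_self M h.nonneg

open scoped MatrixOrder in
lemma matSqrt_unique {N : Matrix n n ℂ} (hN : N.PosSemidef) (h : M.PosSemidef)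
    (e : N * N = M) : matSqrt M = N := by
  rw [matSqrt_eq_cfc h]
  exact (CFC.sqrt_eq_iff M N h.nonneg hN.nonneg).mpr e

lemma herm_trace_eq (hM : M.IsHermitian) : M.trace = ((∑ i, hM.eigenvalues i : ℝ) : ℂ) := by
  conv_lhs => rw [← specFun_id hM]
  exact specFun_trace hM _

lemma psd_trace_re_nonneg (h : M.PosSemidef) : 0 ≤ M.trace.re := by
  rw [herm_trace_eq h.1]
  simpa using Finset.sum_nonneg (fun i _ => h.eigenvalues_nonneg i)

lemma herm_trace_re (hM : M.IsHermitian) : ((M.trace.re : ℝ) : ℂ) = M.trace := by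
  rw [herm_trace_eq hM]; simp

lemma psd_trace_zero (h : M.PosSemidef) (h0 : M.trace = 0) : M = 0 := by
  have h1 : ∑ i, h.1.eigenvalues i = 0 := by
    have := herm_trace_eq h.1 ▸ h0
    exact_mod_cast this
  have h2 : ∀ i ∈ Finset.univ, h.1.eigenvalues i = 0 :=
    (Finset.sum_eq_zero_iff_of_nonneg (fun i _ => h.eigenvalues_nonneg i)).mp h1
  calc M = specFun h.1 (fun x => x) := (specFun_id h.1).symm
  _ = specFun h.1 (fun _ => 0) := specFun_congr h.1 (fun i => h2 i (Finset.mem_univ i))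
  _ = 0 := specFun_zero h.1

lemma psd_one_sub (h : M.PosSemidef) (ht : M.trace.re ≤ 1) :
    ((1 : Matrix n n ℂ) - M).PosSemidef := by
  have e := specFun_sub h.1 (fun _ => 1) (fun x => x)
  rw [specFun_one, specFun_id] at e
  rw [e]
  refine specFun_psd _ (fun i => ?_)
  have h1 : h.1.eigenvalues i ≤ ∑ j, h.1.eigenvalues j :=
    Finset.single_le_sum (fun j _ => h.eigenvalues_nonneg j) (Finset.mem_univ i)
  have h2 : M.trace.re = ∑ j, h.1.eigenvalues j := by
    rw [herm_trace_eq h.1]; simp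
  show (0:ℝ) ≤ 1 - h.1.eigenvalues i
  linarith

lemma psd_sq_le_one (hMp : M.PosSemidef) (h : (M - M * M).PosSemidef) :
    ((1 : Matrix n n ℂ) - M).PosSemidef := by
  have key : ∀ i, hMp.1.eigenvalues i ≤ 1 := by
    intro i
    set lam := hMp.1.eigenvalues i with hlam
    set v : n → ℂ := (WithLp.equiv 2 _) (hMp.1.eigenvectorBasis i) with hv
    have hMv : M *ᵥ v = lam • v := hMp.1.mulVec_eigenvectorBasis i
    have hvnorm : dotProduct (star v) v = 1 := by
      have h1 := (EuclideanSpace.inner_eq_star_dotProduct (hMp.1.eigenvectorBasis i)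
        (hMp.1.eigenvectorBasis i)).symm
      rw [inner_self_eq_norm_sq_to_K, hMp.1.eigenvectorBasis.orthonormal.1 i] at h1
      simp at h1
      rw [dotProduct_comm]
      exact h1
    have h2 := h.dotProduct_mulVec_nonneg v
    rw [Matrix.sub_mulVec, ← Matrix.mulVec_mulVec, hMv, Matrix.mulVec_smul, hMv] at h2
    have h3 : dotProduct (star v) (lam • v - lam • lam • v)
        = ((lam - lam * lam : ℝ) : ℂ) := by
      rw [dotProduct_sub, dotProduct_smul, dotProduct_smul,
        dotProduct_smul, hvnorm]
      simp only [Complex.real_smul]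
      push_cast
      ring
    rw [h3] at h2
    have h4 : (0:ℝ) ≤ lam - lam * lam := by exact_mod_cast h2
    have h5 : 0 ≤ lam := hMp.eigenvalues_nonneg i
    nlinarith
  have e := specFun_sub hMp.1 (fun _ => 1) (fun x => x)
  rw [specFun_one, specFun_id] at e
  rw [e]
  exact specFun_psd _ (fun i => by simpa using key i)


lemma specFun_mul_id (hM : M.IsHermitian) (f : ℝ → ℝ) :
    specFun hM f * M = specFun hM (fun x => f x * x) := by
  rw [← specFun_mul hM f (fun x => x), specFun_id]

lemma specFun_id_mul (hM : M.IsHermitian) (f : ℝ → ℝ) :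
    M * specFun hM f = specFun hM (fun x => x * f x) := by
  rw [← specFun_mul hM (fun x => x) f, specFun_id]

lemma inv_mul_self_le_one {a : ℝ} (ha : 0 ≤ a) : a⁻¹ * a ≤ 1 := by
  rcases eq_or_lt_of_le ha with h | h
  · simp [← h]
  · rw [inv_mul_cancel₀ h.ne']

lemma sqrtinv_mul_self {x : ℝ} (hx : 0 ≤ x) : (Real.sqrt x)⁻¹ * x = Real.sqrt x := by
  rcases eq_or_lt_of_le hx with h | h
  · simp [← h]
  · have hs : 0 < Real.sqrt x := Real.sqrt_pos.mpr h
    rw [inv_mul_eq_div, div_eq_iff hs.ne']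
    exact (Real.mul_self_sqrt hx).symm

section Polar

variable (Z : Matrix n n ℂ)

/-- "pseudo-inverse of sqrt" factor for the polar decomposition. -/
noncomputable def pR : Matrix n n ℂ :=
  specFun (Matrix.posSemidef_conjTranspose_mul_self Z).1 (fun x => (Real.sqrt x)⁻¹)

/-- Partial isometry in the polar decomposition of `Z`. -/
noncomputable def polarV : Matrix n n ℂ := Z * pR Z

lemma polarP_eq : matSqrt (Zᴴ * Z)
    = specFun (Matrix.posSemidef_conjTranspose_mul_self Z).1 Real.sqrt :=
  matSqrt_eq (Matrix.posSemidef_conjTranspose_mul_self Z)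

lemma pR_herm : (pR Z)ᴴ = pR Z := specFun_isHermitian _ _

lemma polarV_conjT_mul : (polarV Z)ᴴ * Z = matSqrt (Zᴴ * Z) := by
  have h1 : (polarV Z)ᴴ * Z = pR Z * (Zᴴ * Z) := by
    rw [polarV, Matrix.conjTranspose_mul, pR_herm, Matrix.mul_assoc]
  rw [h1, pR, specFun_mul_id, polarP_eq]
  exact specFun_congr _ (fun i =>
    sqrtinv_mul_self ((Matrix.posSemidef_conjTranspose_mul_self Z).eigenvalues_nonneg i))

lemma polarV_conjT_mul_self : (polarV Z)ᴴ * polarV Z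
    = specFun (Matrix.posSemidef_conjTranspose_mul_self Z).1
        (fun x => (Real.sqrt x)⁻¹ * Real.sqrt x) := by
  have h1 : (polarV Z)ᴴ * polarV Z = ((polarV Z)ᴴ * Z) * pR Z := by
    rw [polarV, Matrix.mul_assoc]
  rw [h1, polarV_conjT_mul, polarP_eq, pR, specFun_mul]
  exact specFun_congr _ (fun i => mul_comm _ _)

lemma polarV_contract : ((1 : Matrix n n ℂ) - (polarV Z)ᴴ * polarV Z).PosSemidef := by
  rw [polarV_conjT_mul_self]
  have e := specFun_sub (Matrix.posSemidef_conjTranspose_mul_self Z).1 (fun _ => 1)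
    (fun x => (Real.sqrt x)⁻¹ * Real.sqrt x)
  rw [specFun_one] at e
  rw [e]
  refine specFun_psd _ (fun i => ?_)
  have := inv_mul_self_le_one (Real.sqrt_nonneg
    ((Matrix.posSemidef_conjTranspose_mul_self Z).1.eigenvalues i))
  simp only [sub_nonneg]
  exact this

lemma polarV_mul_matSqrt : polarV Z * matSqrt (Zᴴ * Z) = Z := by
  set hS := Matrix.posSemidef_conjTranspose_mul_self Z with hhS
  have h1 : polarV Z * matSqrt (Zᴴ * Z)
      = Z * specFun hS.1 (fun x => (Real.sqrt x)⁻¹ * Real.sqrt x) := by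
    rw [polarV, polarP_eq, pR, Matrix.mul_assoc, specFun_mul]
  rw [h1]
  have key : Z * specFun hS.1 (fun x => 1 - (Real.sqrt x)⁻¹ * Real.sqrt x) = 0 := by
    rw [← Matrix.conjTranspose_mul_self_eq_zero]
    have hh : (Z * specFun hS.1 (fun x => 1 - (Real.sqrt x)⁻¹ * Real.sqrt x))ᴴ
        * (Z * specFun hS.1 (fun x => 1 - (Real.sqrt x)⁻¹ * Real.sqrt x))
        = specFun hS.1 (fun x => 1 - (Real.sqrt x)⁻¹ * Real.sqrt x) * (Zᴴ * Z)
          * specFun hS.1 (fun x => 1 - (Real.sqrt x)⁻¹ * Real.sqrt x) := by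
      rw [Matrix.conjTranspose_mul, (specFun_isHermitian hS.1 _)]
      simp only [Matrix.mul_assoc]
    rw [hh, specFun_mul_id, specFun_mul]
    calc specFun hS.1 (fun x => (1 - (Real.sqrt x)⁻¹ * Real.sqrt x) * x
          * (1 - (Real.sqrt x)⁻¹ * Real.sqrt x))
        = specFun hS.1 (fun _ => 0) := specFun_congr _ (fun i => by
          have hx := hS.eigenvalues_nonneg i
          rcases eq_or_lt_of_le hx with h | h
          · simp [← h]
          · have hs : Real.sqrt (hS.1.eigenvalues i) ≠ 0 := (Real.sqrt_pos.mpr h).ne'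
            simp [inv_mul_cancel₀ hs])
      _ = 0 := specFun_zero _
  have e := specFun_sub hS.1 (fun _ => 1) (fun x => (Real.sqrt x)⁻¹ * Real.sqrt x)
  rw [specFun_one] at e
  rw [← e, Matrix.mul_sub, Matrix.mul_one, sub_eq_zero] at key
  exact key.symm

lemma polarV_mul_conjT_contract :
    ((1 : Matrix n n ℂ) - polarV Z * (polarV Z)ᴴ).PosSemidef := by
  have hpsd : (polarV Z * (polarV Z)ᴴ).PosSemidef :=
    Matrix.posSemidef_self_mul_conjTranspose _
  refine psd_sq_le_one hpsd ?_
  have e : polarV Z * (polarV Z)ᴴ - (polarV Z * (polarV Z)ᴴ) * (polarV Z * (polarV Z)ᴴ)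
      = polarV Z * ((1 : Matrix n n ℂ) - (polarV Z)ᴴ * polarV Z) * (polarV Z)ᴴ := by
    noncomm_ring
  rw [e]
  exact (polarV_contract Z).mul_mul_conjTranspose_same _

lemma trace_matSqrt_symm : (matSqrt (Z * Zᴴ)).trace = (matSqrt (Zᴴ * Z)).trace := by
  set hS := Matrix.posSemidef_conjTranspose_mul_self Z with hhS
  have hP := matSqrt_psd hS
  have hN : (polarV Z * matSqrt (Zᴴ * Z) * (polarV Z)ᴴ).PosSemidef :=
    hP.mul_mul_conjTranspose_same _
  have h1 : matSqrt (Zᴴ * Z) * ((polarV Z)ᴴ * polarV Z) * matSqrt (Zᴴ * Z) = Zᴴ * Z := by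
    rw [polarV_conjT_mul_self, polarP_eq, specFun_mul, specFun_mul]
    calc specFun hS.1 (fun x => Real.sqrt x * ((Real.sqrt x)⁻¹ * Real.sqrt x) * Real.sqrt x)
        = specFun hS.1 (fun x => x) := specFun_congr _ (fun i => by
          have hx := hS.eigenvalues_nonneg i
          rcases eq_or_lt_of_le hx with h | h
          · simp [← h]
          · have hs : Real.sqrt (hS.1.eigenvalues i) ≠ 0 := (Real.sqrt_pos.mpr h).ne'
            rw [inv_mul_cancel₀ hs, mul_one]
            exact Real.mul_self_sqrt hx)
      _ = Zᴴ * Z := specFun_id _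
  have e2 : (polarV Z * matSqrt (Zᴴ * Z)) * (polarV Z * matSqrt (Zᴴ * Z))ᴴ
      = polarV Z * (Zᴴ * Z) * (polarV Z)ᴴ := by
    rw [Matrix.conjTranspose_mul, (matSqrt_herm hS)]
    rw [show polarV Z * matSqrt (Zᴴ * Z) * (matSqrt (Zᴴ * Z) * (polarV Z)ᴴ)
        = polarV Z * (matSqrt (Zᴴ * Z) * matSqrt (Zᴴ * Z)) * (polarV Z)ᴴ from by noncomm_ring,
      matSqrt_mul_self hS]
  have hsq : (polarV Z * matSqrt (Zᴴ * Z) * (polarV Z)ᴴ)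
      * (polarV Z * matSqrt (Zᴴ * Z) * (polarV Z)ᴴ) = Z * Zᴴ := by
    calc (polarV Z * matSqrt (Zᴴ * Z) * (polarV Z)ᴴ)
        * (polarV Z * matSqrt (Zᴴ * Z) * (polarV Z)ᴴ)
        = polarV Z * (matSqrt (Zᴴ * Z) * ((polarV Z)ᴴ * polarV Z) * matSqrt (Zᴴ * Z))
          * (polarV Z)ᴴ := by noncomm_ring
      _ = polarV Z * (Zᴴ * Z) * (polarV Z)ᴴ := by rw [h1]
      _ = (polarV Z * matSqrt (Zᴴ * Z)) * ((polarV Z * matSqrt (Zᴴ * Z)))ᴴ := e2.symm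
      _ = Z * Zᴴ := by rw [polarV_mul_matSqrt]
  have heq := matSqrt_unique hN (Matrix.posSemidef_self_mul_conjTranspose Z) hsq
  rw [heq, Matrix.trace_mul_cycle]
  have h2 : (polarV Z)ᴴ * polarV Z * matSqrt (Zᴴ * Z) = matSqrt (Zᴴ * Z) := by
    rw [polarV_conjT_mul_self, polarP_eq, specFun_mul]
    exact specFun_congr _ (fun i => by
      have hx := hS.eigenvalues_nonneg i
      rcases eq_or_lt_of_le hx with h | h
      · simp [← h]
      · have hs : Real.sqrt (hS.1.eigenvalues i) ≠ 0 := (Real.sqrt_pos.mpr h).ne'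
        field_simp)
  rw [h2]

end Polar

/-- Trace norm. -/
noncomputable def trNorm (Z : Matrix n n ℂ) : ℝ := (matSqrt (Zᴴ * Z)).trace.re

lemma trNorm_nonneg (Z : Matrix n n ℂ) : 0 ≤ trNorm Z :=
  psd_trace_re_nonneg (matSqrt_psd (Matrix.posSemidef_conjTranspose_mul_self Z))

lemma trace_re_le_of_psd_sub {A B : Matrix n n ℂ} (h : (B - A).PosSemidef) :
    A.trace.re ≤ B.trace.re := by
  have h1 := psd_trace_re_nonneg h
  rw [Matrix.trace_sub, Complex.sub_re] at h1
  linarith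

lemma matSqrt_matSqrt (h : M.PosSemidef) :
    matSqrt (matSqrt M) = specFun h.1 (fun x => Real.sqrt (Real.sqrt x)) := by
  refine (matSqrt_unique (specFun_psd _ (fun i => Real.sqrt_nonneg _)) (matSqrt_psd h) ?_)
  rw [specFun_mul, matSqrt_eq h]
  exact specFun_congr _ (fun i => Real.mul_self_sqrt (Real.sqrt_nonneg _))

/-- Matrix viewed as a Euclidean vector. -/
noncomputable def vecM {m : Type*} (X : Matrix m n ℂ) : EuclideanSpace ℂ (m × n) :=
  WithLp.toLp 2 (fun p : m × n => X p.1 p.2)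

lemma trace_conjT_mul_eq_inner {m : Type*} [Fintype m] (X Y : Matrix m n ℂ) :
    (Xᴴ * Y).trace = inner (𝕜 := ℂ) (vecM X) (vecM Y) := by
  have h1 : (Xᴴ * Y).trace = ∑ j : n, ∑ i : m, star (X i j) * Y i j := by
    simp [Matrix.trace, Matrix.diag, Matrix.mul_apply, Matrix.conjTranspose_apply]
  rw [h1, PiLp.inner_apply]
  simp only [RCLike.inner_apply]
  rw [Fintype.sum_prod_type]
  rw [Finset.sum_comm]
  refine Finset.sum_congr rfl fun _ _ => Finset.sum_congr rfl fun _ _ => ?_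
  rw [mul_comm]
  rfl

lemma frob_cs {m : Type*} [Fintype m] (X Y : Matrix m n ℂ) :
    ((Xᴴ * Y).trace).re ≤
      Real.sqrt (((Xᴴ * X).trace).re) * Real.sqrt (((Yᴴ * Y).trace).re) := by
  have h1 : (Xᴴ * Y).trace = inner (𝕜 := ℂ) (vecM X) (vecM Y) := trace_conjT_mul_eq_inner X Y
  have h2 : (Xᴴ * X).trace = inner (𝕜 := ℂ) (vecM X) (vecM X) := trace_conjT_mul_eq_inner X X
  have h3 : (Yᴴ * Y).trace = inner (𝕜 := ℂ) (vecM Y) (vecM Y) := trace_conjT_mul_eq_inner Y Y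
  have hnu : ‖vecM X‖ = Real.sqrt ((inner (𝕜 := ℂ) (vecM X) (vecM X) : ℂ).re) := by
    rw [norm_eq_sqrt_re_inner (𝕜 := ℂ)]
    norm_num [RCLike.re_to_complex]
  have hnv : ‖vecM Y‖ = Real.sqrt ((inner (𝕜 := ℂ) (vecM Y) (vecM Y) : ℂ).re) := by
    rw [norm_eq_sqrt_re_inner (𝕜 := ℂ)]
    norm_num [RCLike.re_to_complex]
  calc ((Xᴴ * Y).trace).re = (inner (𝕜 := ℂ) (vecM X) (vecM Y) : ℂ).re := by rw [h1]
    _ ≤ ‖(inner (𝕜 := ℂ) (vecM X) (vecM Y) : ℂ)‖ := by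
        exact Complex.re_le_norm _
    _ ≤ ‖vecM X‖ * ‖vecM Y‖ := norm_inner_le_norm _ _
    _ = Real.sqrt (((Xᴴ * X).trace).re) * Real.sqrt (((Yᴴ * Y).trace).re) := by
        rw [hnu, hnv, h2, h3]

lemma re_trace_mul_le (C Z : Matrix n n ℂ)
    (hC : ((1 : Matrix n n ℂ) - Cᴴ * C).PosSemidef) :
    ((C * Z).trace).re ≤ trNorm Z := by
  have hS := Matrix.posSemidef_conjTranspose_mul_self Z
  have hPpsd : (matSqrt (Zᴴ * Z)).PosSemidef := matSqrt_psd hS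
  have hGpsd : (matSqrt (matSqrt (Zᴴ * Z))).PosSemidef := matSqrt_psd hPpsd
  set G := matSqrt (matSqrt (Zᴴ * Z)) with hGdef
  have hGherm : G.IsHermitian := hGpsd.1
  have hGG : G * G = matSqrt (Zᴴ * Z) := matSqrt_mul_self hPpsd
  have etr : ((C * Z).trace).re = ((Gᴴ * (C * polarV Z * G)).trace).re := by
    have e1 : C * Z = (C * polarV Z * G) * G := by
      rw [show (C * polarV Z * G) * G = C * (polarV Z * (G * G)) from by noncomm_ring,
        hGG, polarV_mul_matSqrt]
    rw [e1, Matrix.trace_mul_comm, hGherm.eq]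
  have hfirst : ((Gᴴ * G).trace).re = trNorm Z := by
    rw [hGherm.eq, hGG]; rfl
  have hT : (((C * polarV Z * G)ᴴ * (C * polarV Z * G)).trace).re
      ≤ (((polarV Z * G)ᴴ * (polarV Z * G)).trace).re := by
    apply trace_re_le_of_psd_sub
    have e2 : (polarV Z * G)ᴴ * (polarV Z * G) - (C * polarV Z * G)ᴴ * (C * polarV Z * G)
        = (polarV Z * G)ᴴ * (1 - Cᴴ * C) * (polarV Z * G) := by
      simp only [Matrix.conjTranspose_mul]
      noncomm_ring
    rw [e2]
    exact hC.conjTranspose_mul_mul_same _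
  have hVG : (((polarV Z * G)ᴴ * (polarV Z * G)).trace).re = trNorm Z := by
    have e2 : (polarV Z * G)ᴴ * (polarV Z * G) = Gᴴ * ((polarV Z)ᴴ * polarV Z) * G := by
      simp only [Matrix.conjTranspose_mul]
      noncomm_ring
    have e3 : (Gᴴ * ((polarV Z)ᴴ * polarV Z) * G).trace
        = ((G * Gᴴ) * ((polarV Z)ᴴ * polarV Z)).trace := by
      rw [Matrix.trace_mul_cycle]
    have e4 : (G * Gᴴ) * ((polarV Z)ᴴ * polarV Z) = matSqrt (Zᴴ * Z)
        * specFun hS.1 (fun x => (Real.sqrt x)⁻¹ * Real.sqrt x) := by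
      rw [hGherm.eq, hGG, polarV_conjT_mul_self]
    have e5 : matSqrt (Zᴴ * Z) * specFun hS.1 (fun x => (Real.sqrt x)⁻¹ * Real.sqrt x)
        = matSqrt (Zᴴ * Z) := by
      rw [polarP_eq, specFun_mul]
      exact specFun_congr _ (fun i => by
        have hx := hS.eigenvalues_nonneg i
        rcases eq_or_lt_of_le hx with h | h
        · simp [← h]
        · have hsx : Real.sqrt (hS.1.eigenvalues i) ≠ 0 := (Real.sqrt_pos.mpr h).ne'
          field_simp)
    rw [e2, e3, e4, e5]
    rfl
  calc ((C * Z).trace).re = ((Gᴴ * (C * polarV Z * G)).trace).re := etr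
    _ ≤ Real.sqrt (((Gᴴ * G).trace).re)
        * Real.sqrt ((((C * polarV Z * G)ᴴ * (C * polarV Z * G)).trace).re) := frob_cs _ _
    _ ≤ Real.sqrt (trNorm Z) * Real.sqrt (trNorm Z) := by
        apply mul_le_mul
        · rw [hfirst]
        · exact Real.sqrt_le_sqrt (le_trans hT (le_of_eq hVG))
        · exact Real.sqrt_nonneg _
        · exact Real.sqrt_nonneg _
    _ = trNorm Z := Real.mul_self_sqrt (trNorm_nonneg Z)

lemma psd_conj_herm {A B : Matrix n n ℂ} (hA : A.PosSemidef) (hB : B.IsHermitian) :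
    (B * A * B).PosSemidef := by
  have := hA.conjTranspose_mul_mul_same B
  rwa [hB.eq] at this

lemma trace_sqrt_mono {A B : Matrix n n ℂ} (hA : A.PosSemidef) (hB : B.PosSemidef)
    (hAB : (B - A).PosSemidef) : (matSqrt A).trace.re ≤ (matSqrt B).trace.re := by
  have hRherm : (specFun hB.1 (fun x => (Real.sqrt x)⁻¹)).IsHermitian :=
    specFun_isHermitian _ _
  have hchi_eq : ∀ i, (Real.sqrt (hB.1.eigenvalues i))⁻¹ * hB.1.eigenvalues i
      * (Real.sqrt (hB.1.eigenvalues i))⁻¹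
      = (Real.sqrt (hB.1.eigenvalues i))⁻¹ * Real.sqrt (hB.1.eigenvalues i) := by
    intro i
    rw [sqrtinv_mul_self (hB.eigenvalues_nonneg i)]
    exact mul_comm _ _
  have hRBR : specFun hB.1 (fun x => (Real.sqrt x)⁻¹) * B
      * specFun hB.1 (fun x => (Real.sqrt x)⁻¹)
      = specFun hB.1 (fun x => (Real.sqrt x)⁻¹ * Real.sqrt x) := by
    rw [specFun_mul_id, specFun_mul]
    exact specFun_congr _ hchi_eq
  have hone := specFun_sub hB.1 (fun _ => 1) (fun x => (Real.sqrt x)⁻¹ * Real.sqrt x)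
  rw [specFun_one] at hone
  -- √A is killed by the complement of the support of B
  have hNzero : matSqrt A * specFun hB.1 (fun x => 1 - (Real.sqrt x)⁻¹ * Real.sqrt x) = 0 := by
    rw [← Matrix.conjTranspose_mul_self_eq_zero]
    have e1 : (matSqrt A * specFun hB.1 (fun x => 1 - (Real.sqrt x)⁻¹ * Real.sqrt x))ᴴ
        * (matSqrt A * specFun hB.1 (fun x => 1 - (Real.sqrt x)⁻¹ * Real.sqrt x))
        = specFun hB.1 (fun x => 1 - (Real.sqrt x)⁻¹ * Real.sqrt x) * A
          * specFun hB.1 (fun x => 1 - (Real.sqrt x)⁻¹ * Real.sqrt x) := by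
      rw [Matrix.conjTranspose_mul, (specFun_isHermitian hB.1 _).eq, (matSqrt_herm hA).eq,
        show specFun hB.1 (fun x => 1 - (Real.sqrt x)⁻¹ * Real.sqrt x) * matSqrt A
          * (matSqrt A * specFun hB.1 (fun x => 1 - (Real.sqrt x)⁻¹ * Real.sqrt x))
          = specFun hB.1 (fun x => 1 - (Real.sqrt x)⁻¹ * Real.sqrt x)
            * (matSqrt A * matSqrt A)
            * specFun hB.1 (fun x => 1 - (Real.sqrt x)⁻¹ * Real.sqrt x) from by noncomm_ring,
        matSqrt_mul_self hA]
    rw [e1]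
    have hzeroB : specFun hB.1 (fun x => 1 - (Real.sqrt x)⁻¹ * Real.sqrt x) * B
        * specFun hB.1 (fun x => 1 - (Real.sqrt x)⁻¹ * Real.sqrt x) = 0 := by
      rw [specFun_mul_id, specFun_mul]
      calc specFun hB.1 (fun x => (1 - (Real.sqrt x)⁻¹ * Real.sqrt x) * x
            * (1 - (Real.sqrt x)⁻¹ * Real.sqrt x))
          = specFun hB.1 (fun _ => 0) := specFun_congr _ (fun i => by
            have hx := hB.eigenvalues_nonneg i
            rcases eq_or_lt_of_le hx with h | h
            · simp [← h]
            · have hsx : Real.sqrt (hB.1.eigenvalues i) ≠ 0 := (Real.sqrt_pos.mpr h).ne'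
              simp [inv_mul_cancel₀ hsx])
        _ = 0 := specFun_zero _
    have hpsd1 : (specFun hB.1 (fun x => 1 - (Real.sqrt x)⁻¹ * Real.sqrt x) * A
        * specFun hB.1 (fun x => 1 - (Real.sqrt x)⁻¹ * Real.sqrt x)).PosSemidef :=
      psd_conj_herm hA (specFun_isHermitian _ _)
    have hpsd2 : (0 - specFun hB.1 (fun x => 1 - (Real.sqrt x)⁻¹ * Real.sqrt x) * A
        * specFun hB.1 (fun x => 1 - (Real.sqrt x)⁻¹ * Real.sqrt x)).PosSemidef := by
      rw [← hzeroB,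
        show specFun hB.1 (fun x => 1 - (Real.sqrt x)⁻¹ * Real.sqrt x) * B
            * specFun hB.1 (fun x => 1 - (Real.sqrt x)⁻¹ * Real.sqrt x)
          - specFun hB.1 (fun x => 1 - (Real.sqrt x)⁻¹ * Real.sqrt x) * A
            * specFun hB.1 (fun x => 1 - (Real.sqrt x)⁻¹ * Real.sqrt x)
          = specFun hB.1 (fun x => 1 - (Real.sqrt x)⁻¹ * Real.sqrt x) * (B - A)
            * specFun hB.1 (fun x => 1 - (Real.sqrt x)⁻¹ * Real.sqrt x) from by noncomm_ring]
      exact psd_conj_herm hAB (specFun_isHermitian _ _)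
    have ht1 := psd_trace_re_nonneg hpsd1
    have ht2 := psd_trace_re_nonneg hpsd2
    rw [Matrix.trace_sub, Complex.sub_re, Matrix.trace_zero] at ht2
    simp only [Complex.zero_re, zero_sub, neg_nonneg] at ht2
    refine psd_trace_zero hpsd1 ?_
    rw [← herm_trace_re hpsd1.1]
    norm_cast
    linarith
  have hQA : matSqrt A * specFun hB.1 (fun x => (Real.sqrt x)⁻¹ * Real.sqrt x) = matSqrt A := by
    rw [← hone, Matrix.mul_sub, Matrix.mul_one, sub_eq_zero] at hNzero
    exact hNzero.symm
  -- tr √A = tr (C √B) with contraction C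
  have hkey : matSqrt A = (matSqrt A * specFun hB.1 (fun x => (Real.sqrt x)⁻¹)) * matSqrt B := by
    rw [Matrix.mul_assoc, matSqrt_eq hB, specFun_mul]
    exact hQA.symm
  have hcontr : ((1 : Matrix n n ℂ)
      - (matSqrt A * specFun hB.1 (fun x => (Real.sqrt x)⁻¹))ᴴ
        * (matSqrt A * specFun hB.1 (fun x => (Real.sqrt x)⁻¹))).PosSemidef := by
    have e1 : (matSqrt A * specFun hB.1 (fun x => (Real.sqrt x)⁻¹))ᴴ
        * (matSqrt A * specFun hB.1 (fun x => (Real.sqrt x)⁻¹))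
        = specFun hB.1 (fun x => (Real.sqrt x)⁻¹) * A
          * specFun hB.1 (fun x => (Real.sqrt x)⁻¹) := by
      rw [Matrix.conjTranspose_mul, (specFun_isHermitian hB.1 _).eq, (matSqrt_herm hA).eq,
        show specFun hB.1 (fun x => (Real.sqrt x)⁻¹) * matSqrt A
            * (matSqrt A * specFun hB.1 (fun x => (Real.sqrt x)⁻¹))
          = specFun hB.1 (fun x => (Real.sqrt x)⁻¹) * (matSqrt A * matSqrt A)
            * specFun hB.1 (fun x => (Real.sqrt x)⁻¹) from by noncomm_ring,
        matSqrt_mul_self hA]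
    rw [e1,
      show (1 : Matrix n n ℂ) - specFun hB.1 (fun x => (Real.sqrt x)⁻¹) * A
          * specFun hB.1 (fun x => (Real.sqrt x)⁻¹)
        = ((1 : Matrix n n ℂ) - specFun hB.1 (fun x => (Real.sqrt x)⁻¹) * B
            * specFun hB.1 (fun x => (Real.sqrt x)⁻¹))
          + (specFun hB.1 (fun x => (Real.sqrt x)⁻¹) * (B - A)
            * specFun hB.1 (fun x => (Real.sqrt x)⁻¹)) from by noncomm_ring]
    refine Matrix.PosSemidef.add ?_ (psd_conj_herm hAB (specFun_isHermitian _ _))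
    rw [hRBR, hone]
    refine specFun_psd _ (fun i => ?_)
    simp only [sub_nonneg]
    exact inv_mul_self_le_one (Real.sqrt_nonneg _)
  have hfinal := re_trace_mul_le _ (matSqrt B) hcontr
  rw [← hkey] at hfinal
  have : trNorm (matSqrt B) = (matSqrt B).trace.re := by
    rw [trNorm, (matSqrt_herm hB).eq, matSqrt_mul_self hB]
  rwa [this] at hfinal

lemma fid_inner_psd {ρ σ : Matrix n n ℂ} (hρ : ρ.PosSemidef) (hσ : σ.PosSemidef) :
    (matSqrt ρ * σ * matSqrt ρ).PosSemidef := psd_conj_herm hσ (matSqrt_herm hρ)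

lemma fid_nonneg {ρ σ : Matrix n n ℂ} (hρ : ρ.PosSemidef) (hσ : σ.PosSemidef) :
    0 ≤ fid ρ σ := psd_trace_re_nonneg (matSqrt_psd (fid_inner_psd hρ hσ))

lemma fid_inner_eq {ρ σ : Matrix n n ℂ} (hρ : ρ.PosSemidef) (hσ : σ.PosSemidef) :
    matSqrt ρ * σ * matSqrt ρ = (matSqrt σ * matSqrt ρ)ᴴ * (matSqrt σ * matSqrt ρ) := by
  rw [Matrix.conjTranspose_mul, (matSqrt_herm hρ).eq, (matSqrt_herm hσ).eq,
    show matSqrt ρ * matSqrt σ * (matSqrt σ * matSqrt ρ)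
      = matSqrt ρ * (matSqrt σ * matSqrt σ) * matSqrt ρ from by noncomm_ring,
    matSqrt_mul_self hσ]

lemma fid_symm {ρ σ : Matrix n n ℂ} (hρ : ρ.PosSemidef) (hσ : σ.PosSemidef) :
    fid ρ σ = fid σ ρ := by
  have h1 : fid ρ σ = (matSqrt ((matSqrt σ * matSqrt ρ)ᴴ
      * (matSqrt σ * matSqrt ρ))).trace.re := by
    rw [fid, fid_inner_eq hρ hσ]
  have h2 : fid σ ρ = (matSqrt ((matSqrt ρ * matSqrt σ)ᴴ
      * (matSqrt ρ * matSqrt σ))).trace.re := by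
    rw [fid, fid_inner_eq hσ hρ]
  have e : (matSqrt ρ * matSqrt σ)ᴴ * (matSqrt ρ * matSqrt σ)
      = (matSqrt σ * matSqrt ρ) * (matSqrt σ * matSqrt ρ)ᴴ := by
    rw [Matrix.conjTranspose_mul, Matrix.conjTranspose_mul, (matSqrt_herm hρ).eq,
      (matSqrt_herm hσ).eq]
  rw [h1, h2, e, trace_matSqrt_symm]

lemma fid_self {ρ : Matrix n n ℂ} (hρ : ρ.PosSemidef) : fid ρ ρ = ρ.trace.re := by
  have e1 : matSqrt ρ * ρ * matSqrt ρ
      = specFun hρ.1 (fun x => Real.sqrt x * x * Real.sqrt x) := by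
    rw [matSqrt_eq hρ, specFun_mul_id, specFun_mul]
  have e2 : ρ * ρ = specFun hρ.1 (fun x => x * x) := by
    have h := specFun_mul_id hρ.1 (fun x => x)
    rw [specFun_id] at h
    exact h
  have e3 : ρ * ρ = matSqrt ρ * ρ * matSqrt ρ := by
    rw [e2, e1]
    refine (specFun_congr _ (fun i => ?_)).symm
    have hx := hρ.eigenvalues_nonneg i
    have h2 : Real.sqrt (hρ.1.eigenvalues i) * Real.sqrt (hρ.1.eigenvalues i)
        = hρ.1.eigenvalues i := Real.mul_self_sqrt hx
    calc Real.sqrt (hρ.1.eigenvalues i) * hρ.1.eigenvalues i * Real.sqrt (hρ.1.eigenvalues i)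
        = (Real.sqrt (hρ.1.eigenvalues i) * Real.sqrt (hρ.1.eigenvalues i))
          * hρ.1.eigenvalues i := by ring
      _ = hρ.1.eigenvalues i * hρ.1.eigenvalues i := by rw [h2]
  have e4 : matSqrt (matSqrt ρ * ρ * matSqrt ρ) = ρ :=
    matSqrt_unique hρ (fid_inner_psd hρ hρ) e3
  rw [fid, e4]

lemma fid_mono {ρ σ σ' : Matrix n n ℂ} (hρ : ρ.PosSemidef) (hσ : σ.PosSemidef)
    (hσ' : σ'.PosSemidef) (h : (σ' - σ).PosSemidef) : fid ρ σ ≤ fid ρ σ' := by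
  rw [fid, fid]
  apply trace_sqrt_mono (fid_inner_psd hρ hσ) (fid_inner_psd hρ hσ')
  rw [show matSqrt ρ * σ' * matSqrt ρ - matSqrt ρ * σ * matSqrt ρ
    = matSqrt ρ * (σ' - σ) * matSqrt ρ from by noncomm_ring]
  exact psd_conj_herm h (matSqrt_herm hρ)

lemma psd_smul_real {c : ℝ} (hc : 0 ≤ c) {M : Matrix n n ℂ} (h : M.PosSemidef) :
    ((c : ℂ) • M).PosSemidef := by
  exact h.smul (Complex.zero_le_real.mpr hc)

lemma matSqrt_smul {c : ℝ} (hc : 0 ≤ c) {M : Matrix n n ℂ} (h : M.PosSemidef) :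
    matSqrt ((c : ℂ) • M) = ((Real.sqrt c : ℝ) : ℂ) • matSqrt M := by
  refine matSqrt_unique (psd_smul_real (Real.sqrt_nonneg c) (matSqrt_psd h))
    (psd_smul_real hc h) ?_
  rw [smul_mul_smul_comm, matSqrt_mul_self h, ← Complex.ofReal_mul, Real.mul_self_sqrt hc]

lemma fid_smul {ρ σ : Matrix n n ℂ} (hρ : ρ.PosSemidef) (hσ : σ.PosSemidef)
    {c : ℝ} (hc : 0 ≤ c) : fid ρ ((c : ℂ) • σ) = Real.sqrt c * fid ρ σ := by
  rw [fid, fid, Matrix.mul_smul, Matrix.smul_mul, matSqrt_smul hc (fid_inner_psd hρ hσ),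
    Matrix.trace_smul]
  simp [smul_eq_mul, Complex.mul_re]

lemma fid_le_sqrt_trace {ρ σ : Matrix n n ℂ} (hρ : ρ.PosSemidef) (hσ : σ.PosSemidef) :
    fid ρ σ ≤ Real.sqrt σ.trace.re * Real.sqrt ρ.trace.re := by
  set Z := matSqrt σ * matSqrt ρ with hZ
  have h0 : fid ρ σ = (((polarV Z)ᴴ * Z).trace).re := by
    rw [fid, fid_inner_eq hρ hσ, ← polarV_conjT_mul]
  have h1 : (polarV Z)ᴴ * Z = (matSqrt σ * polarV Z)ᴴ * matSqrt ρ := by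
    rw [Matrix.conjTranspose_mul, (matSqrt_herm hσ).eq, hZ, Matrix.mul_assoc]
  have hVV : (((matSqrt σ * polarV Z)ᴴ * (matSqrt σ * polarV Z)).trace).re
      ≤ σ.trace.re := by
    have e1 : (matSqrt σ * polarV Z)ᴴ * (matSqrt σ * polarV Z)
        = (polarV Z)ᴴ * σ * polarV Z := by
      rw [Matrix.conjTranspose_mul, (matSqrt_herm hσ).eq,
        show (polarV Z)ᴴ * matSqrt σ * (matSqrt σ * polarV Z)
          = (polarV Z)ᴴ * (matSqrt σ * matSqrt σ) * polarV Z from by noncomm_ring,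
        matSqrt_mul_self hσ]
    have e2 : ((polarV Z)ᴴ * σ * polarV Z).trace
        = ((polarV Z * (polarV Z)ᴴ) * σ).trace := by
      rw [Matrix.trace_mul_cycle]
    have e6 : (matSqrt σ * (polarV Z * (polarV Z)ᴴ) * matSqrt σ).trace
        = ((polarV Z * (polarV Z)ᴴ) * σ).trace := by
      rw [Matrix.trace_mul_cycle, matSqrt_mul_self hσ, Matrix.trace_mul_comm]
    have e3 : σ.trace - ((polarV Z * (polarV Z)ᴴ) * σ).trace
        = (matSqrt σ * ((1 : Matrix n n ℂ) - polarV Z * (polarV Z)ᴴ) * matSqrt σ).trace := by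
      have e4 : matSqrt σ * ((1 : Matrix n n ℂ) - polarV Z * (polarV Z)ᴴ) * matSqrt σ
          = (matSqrt σ * matSqrt σ) - matSqrt σ * (polarV Z * (polarV Z)ᴴ) * matSqrt σ := by
        noncomm_ring
      rw [e4, Matrix.trace_sub, matSqrt_mul_self hσ, e6]
    have e5 := psd_trace_re_nonneg (psd_conj_herm (polarV_mul_conjT_contract Z)
      (matSqrt_herm hσ))
    rw [← e3, Complex.sub_re] at e5
    rw [e1, e2]
    linarith
  have hRho : ((matSqrt ρ)ᴴ * matSqrt ρ).trace = ρ.trace := by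
    rw [(matSqrt_herm hρ).eq, matSqrt_mul_self hρ]
  calc fid ρ σ = (((matSqrt σ * polarV Z)ᴴ * matSqrt ρ).trace).re := by rw [h0, h1]
    _ ≤ Real.sqrt ((((matSqrt σ * polarV Z)ᴴ * (matSqrt σ * polarV Z)).trace).re)
        * Real.sqrt ((((matSqrt ρ)ᴴ * matSqrt ρ).trace).re) := frob_cs _ _
    _ ≤ Real.sqrt σ.trace.re * Real.sqrt ρ.trace.re := by
        apply mul_le_mul (Real.sqrt_le_sqrt hVV) _ (Real.sqrt_nonneg _) (Real.sqrt_nonneg _)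
        rw [hRho]

lemma trace_psd_contract {σ K : Matrix n n ℂ} (hσ : σ.PosSemidef)
    (hK : ((1 : Matrix n n ℂ) - K).PosSemidef) :
    ((K * σ).trace).re ≤ σ.trace.re := by
  have e6 : (matSqrt σ * K * matSqrt σ).trace = (K * σ).trace := by
    rw [Matrix.trace_mul_cycle, matSqrt_mul_self hσ, Matrix.trace_mul_comm]
  have e4 : matSqrt σ * ((1 : Matrix n n ℂ) - K) * matSqrt σ
      = (matSqrt σ * matSqrt σ) - matSqrt σ * K * matSqrt σ := by noncomm_ring
  have e5 := psd_trace_re_nonneg (psd_conj_herm hK (matSqrt_herm hσ))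
  rw [e4, Matrix.trace_sub, matSqrt_mul_self hσ, e6, Complex.sub_re] at e5
  linarith

lemma hilbert_geom {E : Type*} [NormedAddCommGroup E] [InnerProductSpace ℂ E]
    (u u1 u2 : E) (f1 f2 t1 t2 a b : ℝ)
    (hu : inner (𝕜 := ℂ) u u = 1)
    (h1 : inner (𝕜 := ℂ) u u1 = (f1 : ℂ)) (h2 : inner (𝕜 := ℂ) u u2 = (f2 : ℂ))
    (hn1 : inner (𝕜 := ℂ) u1 u1 = (t1 : ℂ)) (hn2 : inner (𝕜 := ℂ) u2 u2 = (t2 : ℂ))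
    (ht1 : t1 ≤ 1) (ht2 : t2 ≤ 1)
    (ha : 0 ≤ a) (hb : 0 ≤ b) (hfa : a ≤ f1) (hfb : b ≤ f2) :
    a * b - Real.sqrt (1 - a ^ 2) * Real.sqrt (1 - b ^ 2)
      ≤ (inner (𝕜 := ℂ) u1 u2 : ℂ).re := by
  set w1 : E := u1 - (f1 : ℂ) • u with hw1def
  set w2 : E := u2 - (f2 : ℂ) • u with hw2def
  have hcross : (inner (𝕜 := ℂ) w1 w2 : ℂ)
      = (inner (𝕜 := ℂ) u1 u2 : ℂ) - ((f1 * f2 : ℝ) : ℂ) := by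
    have hu1u : (inner (𝕜 := ℂ) u1 u : ℂ) = ((f1 : ℝ) : ℂ) := by
      rw [← inner_conj_symm, h1]
      simp [Complex.conj_ofReal]
    rw [hw1def, hw2def]
    simp only [inner_sub_left, inner_sub_right, inner_smul_left, inner_smul_right,
      hu, h1, h2, hu1u, Complex.conj_ofReal]
    push_cast
    ring
  have hnw1 : ‖w1‖ ^ 2 = t1 - f1 ^ 2 := by
    have hu1u : (inner (𝕜 := ℂ) u1 u : ℂ) = ((f1 : ℝ) : ℂ) := by
      rw [← inner_conj_symm, h1]; simp [Complex.conj_ofReal]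
    have e : (inner (𝕜 := ℂ) w1 w1 : ℂ) = ((t1 - f1 ^ 2 : ℝ) : ℂ) := by
      rw [hw1def]
      simp only [inner_sub_left, inner_sub_right, inner_smul_left, inner_smul_right,
        hu, h1, hn1, hu1u, Complex.conj_ofReal]
      push_cast
      ring
    have := norm_eq_sqrt_re_inner (𝕜 := ℂ) w1
    rw [e] at this
    rw [this, Real.sq_sqrt]
    · simp [RCLike.re_to_complex, ← Complex.ofReal_pow]
    · have h0 : (0 : ℝ) ≤ RCLike.re ((t1 - f1 ^ 2 : ℝ) : ℂ) := by
        rw [← e]; exact inner_self_nonneg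
      simpa [RCLike.re_to_complex, ← Complex.ofReal_pow] using h0
  have hnw2 : ‖w2‖ ^ 2 = t2 - f2 ^ 2 := by
    have hu2u : (inner (𝕜 := ℂ) u2 u : ℂ) = ((f2 : ℝ) : ℂ) := by
      rw [← inner_conj_symm, h2]; simp [Complex.conj_ofReal]
    have e : (inner (𝕜 := ℂ) w2 w2 : ℂ) = ((t2 - f2 ^ 2 : ℝ) : ℂ) := by
      rw [hw2def]
      simp only [inner_sub_left, inner_sub_right, inner_smul_left, inner_smul_right,
        hu, h2, hn2, hu2u, Complex.conj_ofReal]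
      push_cast
      ring
    have := norm_eq_sqrt_re_inner (𝕜 := ℂ) w2
    rw [e] at this
    rw [this, Real.sq_sqrt]
    · simp [RCLike.re_to_complex, ← Complex.ofReal_pow]
    · have h0 : (0 : ℝ) ≤ RCLike.re ((t2 - f2 ^ 2 : ℝ) : ℂ) := by
        rw [← e]; exact inner_self_nonneg
      simpa [RCLike.re_to_complex, ← Complex.ofReal_pow] using h0
  have hw1le : ‖w1‖ ≤ Real.sqrt (1 - a ^ 2) := by
    have ha2 : a ^ 2 ≤ f1 ^ 2 := by nlinarith
    have : ‖w1‖ ^ 2 ≤ 1 - a ^ 2 := by rw [hnw1]; linarith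
    calc ‖w1‖ = Real.sqrt (‖w1‖ ^ 2) := (Real.sqrt_sq (norm_nonneg _)).symm
      _ ≤ Real.sqrt (1 - a ^ 2) := Real.sqrt_le_sqrt this
  have hw2le : ‖w2‖ ≤ Real.sqrt (1 - b ^ 2) := by
    have hb2 : b ^ 2 ≤ f2 ^ 2 := by nlinarith
    have : ‖w2‖ ^ 2 ≤ 1 - b ^ 2 := by rw [hnw2]; linarith
    calc ‖w2‖ = Real.sqrt (‖w2‖ ^ 2) := (Real.sqrt_sq (norm_nonneg _)).symm
      _ ≤ Real.sqrt (1 - b ^ 2) := Real.sqrt_le_sqrt this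
  have hre : (inner (𝕜 := ℂ) u1 u2 : ℂ).re
      = f1 * f2 + (inner (𝕜 := ℂ) w1 w2 : ℂ).re := by
    have : (inner (𝕜 := ℂ) u1 u2 : ℂ)
        = (inner (𝕜 := ℂ) w1 w2 : ℂ) + ((f1 * f2 : ℝ) : ℂ) := by
      rw [hcross]; ring
    rw [this]
    simp
    ring
  have hbnd : -(‖w1‖ * ‖w2‖) ≤ (inner (𝕜 := ℂ) w1 w2 : ℂ).re := by
    have h1' : |(inner (𝕜 := ℂ) w1 w2 : ℂ).re| ≤ ‖(inner (𝕜 := ℂ) w1 w2 : ℂ)‖ :=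
      Complex.abs_re_le_norm _
    have h2' : ‖(inner (𝕜 := ℂ) w1 w2 : ℂ)‖ ≤ ‖w1‖ * ‖w2‖ := norm_inner_le_norm _ _
    have := neg_abs_le ((inner (𝕜 := ℂ) w1 w2 : ℂ).re)
    linarith
  have hab : a * b ≤ f1 * f2 :=
    mul_le_mul hfa hfb hb (le_trans ha hfa)
  have hww : ‖w1‖ * ‖w2‖ ≤ Real.sqrt (1 - a ^ 2) * Real.sqrt (1 - b ^ 2) :=
    mul_le_mul hw1le hw2le (norm_nonneg _) (Real.sqrt_nonneg _)
  rw [hre]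
  linarith

lemma fid_triangle {ρ ρ1 ρ2 : Matrix n n ℂ}
    (hρ : ρ.PosSemidef) (hρt : ρ.trace = 1)
    (h1 : ρ1.PosSemidef) (h1t : ρ1.trace.re ≤ 1)
    (h2 : ρ2.PosSemidef) (h2t : ρ2.trace.re ≤ 1)
    {a b : ℝ} (ha : 0 ≤ a) (hb : 0 ≤ b)
    (hfa : a ≤ fid ρ1 ρ) (hfb : b ≤ fid ρ2 ρ) :
    a * b - Real.sqrt (1 - a ^ 2) * Real.sqrt (1 - b ^ 2) ≤ fid ρ1 ρ2 := by
  classical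
  set Z1 := matSqrt ρ1 * matSqrt ρ with hZ1
  set Z2 := matSqrt ρ2 * matSqrt ρ with hZ2
  set X : Matrix n n ℂ := matSqrt ρ with hX
  set X1 : Matrix n n ℂ := (polarV Z1)ᴴ * matSqrt ρ1 with hX1
  set X2 : Matrix n n ℂ := (polarV Z2)ᴴ * matSqrt ρ2 with hX2
  -- ⟪X, X⟫ = 1
  have hXX : (Xᴴ * X).trace = 1 := by
    rw [hX, (matSqrt_herm hρ).eq, matSqrt_mul_self hρ, hρt]
  -- ⟪X, Xi⟫ = fid ρ ρi
  have hXX1 : (Xᴴ * X1).trace = ((fid ρ1 ρ : ℝ) : ℂ) := by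
    have e1 : Xᴴ * X1 = X * ((polarV Z1)ᴴ * matSqrt ρ1) := by
      rw [hX1, (matSqrt_herm hρ).eq]
    have e2 : (X * ((polarV Z1)ᴴ * matSqrt ρ1)).trace = ((polarV Z1)ᴴ * Z1).trace := by
      rw [Matrix.trace_mul_comm, Matrix.mul_assoc, hZ1, hX]
    rw [e1, e2, polarV_conjT_mul]
    have e3 : fid ρ1 ρ = fid ρ ρ1 := fid_symm h1 hρ
    have e4 : fid ρ ρ1 = (matSqrt (Z1ᴴ * Z1)).trace.re := by
      rw [fid, fid_inner_eq hρ h1, hZ1]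
    rw [e3, e4, herm_trace_re (matSqrt_herm (Matrix.posSemidef_conjTranspose_mul_self Z1))]
  have hXX2 : (Xᴴ * X2).trace = ((fid ρ2 ρ : ℝ) : ℂ) := by
    have e1 : Xᴴ * X2 = X * ((polarV Z2)ᴴ * matSqrt ρ2) := by
      rw [hX2, (matSqrt_herm hρ).eq]
    have e2 : (X * ((polarV Z2)ᴴ * matSqrt ρ2)).trace = ((polarV Z2)ᴴ * Z2).trace := by
      rw [Matrix.trace_mul_comm, Matrix.mul_assoc, hZ2, hX]
    rw [e1, e2, polarV_conjT_mul]
    have e3 : fid ρ2 ρ = fid ρ ρ2 := fid_symm h2 hρ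
    have e4 : fid ρ ρ2 = (matSqrt (Z2ᴴ * Z2)).trace.re := by
      rw [fid, fid_inner_eq hρ h2, hZ2]
    rw [e3, e4, herm_trace_re (matSqrt_herm (Matrix.posSemidef_conjTranspose_mul_self Z2))]
  -- norms of Xi
  have hX1X1 : (X1ᴴ * X1).trace = (((X1ᴴ * X1).trace.re : ℝ) : ℂ) :=
    (herm_trace_re (Matrix.posSemidef_conjTranspose_mul_self X1).1).symm
  have hX2X2 : (X2ᴴ * X2).trace = (((X2ᴴ * X2).trace.re : ℝ) : ℂ) :=
    (herm_trace_re (Matrix.posSemidef_conjTranspose_mul_self X2).1).symm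
  have ht1' : (X1ᴴ * X1).trace.re ≤ 1 := by
    have e1 : X1ᴴ * X1 = matSqrt ρ1 * (polarV Z1 * (polarV Z1)ᴴ) * matSqrt ρ1 := by
      rw [hX1, Matrix.conjTranspose_mul, Matrix.conjTranspose_conjTranspose,
        (matSqrt_herm h1).eq]
      noncomm_ring
    have e2 : (matSqrt ρ1 * (polarV Z1 * (polarV Z1)ᴴ) * matSqrt ρ1).trace
        = ((polarV Z1 * (polarV Z1)ᴴ) * ρ1).trace := by
      rw [Matrix.trace_mul_cycle, matSqrt_mul_self h1, Matrix.trace_mul_comm]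
    rw [e1, e2]
    exact le_trans (trace_psd_contract h1 (polarV_mul_conjT_contract Z1)) h1t
  have ht2' : (X2ᴴ * X2).trace.re ≤ 1 := by
    have e1 : X2ᴴ * X2 = matSqrt ρ2 * (polarV Z2 * (polarV Z2)ᴴ) * matSqrt ρ2 := by
      rw [hX2, Matrix.conjTranspose_mul, Matrix.conjTranspose_conjTranspose,
        (matSqrt_herm h2).eq]
      noncomm_ring
    have e2 : (matSqrt ρ2 * (polarV Z2 * (polarV Z2)ᴴ) * matSqrt ρ2).trace
        = ((polarV Z2 * (polarV Z2)ᴴ) * ρ2).trace := by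
      rw [Matrix.trace_mul_cycle, matSqrt_mul_self h2, Matrix.trace_mul_comm]
    rw [e1, e2]
    exact le_trans (trace_psd_contract h2 (polarV_mul_conjT_contract Z2)) h2t
  -- cross term bounded by fidelity
  have hcross : ((X1ᴴ * X2).trace).re ≤ fid ρ1 ρ2 := by
    have e1 : X1ᴴ * X2 = matSqrt ρ1 * ((polarV Z1 * (polarV Z2)ᴴ) * matSqrt ρ2) := by
      rw [hX1, hX2, Matrix.conjTranspose_mul, Matrix.conjTranspose_conjTranspose,
        (matSqrt_herm h1).eq]
      noncomm_ring
    have e2 : (matSqrt ρ1 * ((polarV Z1 * (polarV Z2)ᴴ) * matSqrt ρ2)).trace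
        = ((polarV Z1 * (polarV Z2)ᴴ) * (matSqrt ρ2 * matSqrt ρ1)).trace := by
      rw [Matrix.trace_mul_comm]
      congr 1
      noncomm_ring
    have hcontr : ((1 : Matrix n n ℂ)
        - (polarV Z1 * (polarV Z2)ᴴ)ᴴ * (polarV Z1 * (polarV Z2)ᴴ)).PosSemidef := by
      have e3 : (1 : Matrix n n ℂ)
          - (polarV Z1 * (polarV Z2)ᴴ)ᴴ * (polarV Z1 * (polarV Z2)ᴴ)
          = ((1 : Matrix n n ℂ) - polarV Z2 * (polarV Z2)ᴴ)
            + polarV Z2 * ((1 : Matrix n n ℂ) - (polarV Z1)ᴴ * polarV Z1)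
              * (polarV Z2)ᴴ := by
        rw [Matrix.conjTranspose_mul, Matrix.conjTranspose_conjTranspose]
        noncomm_ring
      rw [e3]
      exact (polarV_mul_conjT_contract Z2).add
        ((polarV_contract Z1).mul_mul_conjTranspose_same _)
    have e4 := re_trace_mul_le (polarV Z1 * (polarV Z2)ᴴ) (matSqrt ρ2 * matSqrt ρ1) hcontr
    have e5 : trNorm (matSqrt ρ2 * matSqrt ρ1) = fid ρ1 ρ2 := by
      rw [trNorm, fid, fid_inner_eq h1 h2]
    rw [e1, e2]
    rw [e5] at e4
    exact e4
  -- assemble via the Hilbert-space geometry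
  have hg := hilbert_geom (vecM X) (vecM X1) (vecM X2) (fid ρ1 ρ) (fid ρ2 ρ)
    ((X1ᴴ * X1).trace.re) ((X2ᴴ * X2).trace.re) a b
    (by rw [← trace_conjT_mul_eq_inner, hXX])
    (by rw [← trace_conjT_mul_eq_inner, hXX1])
    (by rw [← trace_conjT_mul_eq_inner, hXX2])
    (by rw [← trace_conjT_mul_eq_inner, hX1X1]; simp)
    (by rw [← trace_conjT_mul_eq_inner, hX2X2]; simp)
    ht1' ht2' ha hb hfa hfb
  have hfin : (inner (𝕜 := ℂ) (vecM X1) (vecM X2) : ℂ).re ≤ fid ρ1 ρ2 := by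
    rw [← trace_conjT_mul_eq_inner]
    exact hcross
  linarith

lemma real_smul_matrix {m : Type*} (r : ℝ) (M : Matrix m m ℂ) :
    r • M = ((r : ℝ) : ℂ) • M := by
  ext i j
  simp [Matrix.smul_apply, Complex.real_smul]

lemma kron_conjT {A B : Type*} (M : Matrix A A ℂ) (N : Matrix B B ℂ) :
    (M ⊗ₖ N)ᴴ = Mᴴ ⊗ₖ Nᴴ := by
  ext ⟨i, j⟩ ⟨k, l⟩
  simp [Matrix.conjTranspose_apply, Matrix.kroneckerMap_apply, star_mul']

lemma kron_one_psd {A B : Type*} [Fintype A] [DecidableEq A] [Fintype B] [DecidableEq B]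
    {σ : Matrix B B ℂ} (hσ : σ.PosSemidef) :
    ((1 : Matrix A A ℂ) ⊗ₖ σ).PosSemidef := by
  have e : (1 : Matrix A A ℂ) ⊗ₖ σ
      = ((1 : Matrix A A ℂ) ⊗ₖ matSqrt σ)ᴴ * ((1 : Matrix A A ℂ) ⊗ₖ matSqrt σ) := by
    rw [kron_conjT, Matrix.conjTranspose_one, (matSqrt_herm hσ).eq,
      ← Matrix.mul_kronecker_mul, Matrix.one_mul, matSqrt_mul_self hσ]
  rw [e]
  exact Matrix.posSemidef_conjTranspose_mul_self _

lemma cos_le_fid {ρ' ρ : Matrix n n ℂ} (hρ' : ρ'.PosSemidef) (hρ : ρ.PosSemidef)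
    (hρt : ρ.trace.re = 1) {θ : ℝ} (hc : 0 ≤ Real.cos θ)
    (h : pDist ρ' ρ ≤ Real.sin θ) : Real.cos θ ≤ fid ρ' ρ := by
  have hg : genFid ρ' ρ = fid ρ' ρ := by
    rw [genFid, hρt]
    simp
  have hf0 : 0 ≤ fid ρ' ρ := fid_nonneg hρ' hρ
  rw [pDist, hg] at h
  have h2 : 1 - fid ρ' ρ ^ 2 ≤ Real.sin θ ^ 2 := (Real.sqrt_le_iff.mp h).2
  have h3 : Real.cos θ ^ 2 ≤ fid ρ' ρ ^ 2 := by
    have := Real.sin_sq_add_cos_sq θ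
    linarith
  calc Real.cos θ = Real.sqrt (Real.cos θ ^ 2) := (Real.sqrt_sq hc).symm
    _ ≤ Real.sqrt (fid ρ' ρ ^ 2) := Real.sqrt_le_sqrt h3
    _ = fid ρ' ρ := Real.sqrt_sq hf0

lemma pdist_self {ρ : Matrix n n ℂ} (hρ : ρ.PosSemidef) (hρt : ρ.trace = 1) :
    pDist ρ ρ = 0 := by
  have hre : ρ.trace.re = 1 := by rw [hρt]; rfl
  have hg : genFid ρ ρ = 1 := by
    rw [genFid, fid_self hρ, hre]
    simp
  rw [pDist, hg]
  norm_num

lemma sqrt_rpow_two (l : ℝ) : Real.sqrt ((2 : ℝ) ^ (-l)) = (2 : ℝ) ^ (-(l / 2)) := by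
  have e : (2 : ℝ) ^ (-l) = ((2 : ℝ) ^ (-(l / 2))) ^ 2 := by
    rw [sq, ← Real.rpow_add two_pos]
    congr 1
    ring
  rw [e, Real.sqrt_sq (Real.rpow_nonneg (by norm_num) _)]

end Aux

-- AUXEND

set_option maxHeartbeats 2000000 in
/-- Smooth min-entropy bounded by smooth max-entropy, exact form. -/
theorem min_le_max_exact {A B : Type*}
    [Fintype A] [DecidableEq A] [Fintype B] [DecidableEq B]
    (ρ : Matrix (A × B) (A × B) ℂ) (hρ : IsState ρ)
    (α β : ℝ) (hα : 0 ≤ α) (hβ : 0 ≤ β) (hab : α + β < Real.pi / 2) :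
    sHmin (Real.sin α) ρ ≤
      sHmax (Real.sin β) ρ + Real.logb 2 (1 / Real.cos (α + β) ^ 2) := by
  obtain ⟨hρpsd, hρtr⟩ := hρ
  have hρtre : ρ.trace.re = 1 := by rw [hρtr, Complex.one_re]
  have hπ := Real.pi_pos
  have hsa : 0 ≤ Real.sin α := Real.sin_nonneg_of_nonneg_of_le_pi hα (by linarith)
  have hsb : 0 ≤ Real.sin β := Real.sin_nonneg_of_nonneg_of_le_pi hβ (by linarith)
  have hca : 0 ≤ Real.cos α := Real.cos_nonneg_of_mem_Icc ⟨by linarith, by linarith⟩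
  have hcb : 0 ≤ Real.cos β := Real.cos_nonneg_of_mem_Icc ⟨by linarith, by linarith⟩
  have hcab : 0 < Real.cos (α + β) := Real.cos_pos_of_mem_Ioo ⟨by linarith, hab⟩
  set c := Real.cos (α + β) with hcdef
  have hself : pDist ρ ρ = 0 := pdist_self hρpsd hρtr
  have hρsub : IsSubState ρ := ⟨hρpsd, le_of_eq hρtre⟩
  have hABne : Nonempty (A × B) := by
    by_contra hne
    rw [not_nonempty_iff] at hne
    have h0 : ρ.trace = 0 := by simp [Matrix.trace]
    rw [h0] at hρtr
    exact one_ne_zero hρtr.symm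
  have hBne : Nonempty B := ⟨hABne.some.2⟩
  have hB0 : (0 : ℝ) < Fintype.card B := by exact_mod_cast Fintype.card_pos
  apply csSup_le
  · exact ⟨Hmin ρ, ρ, hρsub, by rw [hself]; exact hsa, rfl⟩
  rintro h ⟨ρ1, hsub1, hpd1, rfl⟩
  have hf1 : Real.cos α ≤ fid ρ1 ρ := cos_le_fid hsub1.1 hρpsd hρtre hca hpd1
  apply csSup_le
  · -- the Hmin set is nonempty
    refine ⟨-Real.logb 2 (Fintype.card B),
      ((Fintype.card B : ℂ))⁻¹ • (1 : Matrix B B ℂ), ⟨?_, ?_⟩, ?_⟩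
    · have e : ((Fintype.card B : ℂ))⁻¹ • (1 : Matrix B B ℂ)
          = (((Fintype.card B : ℝ)⁻¹ : ℝ) : ℂ) • (1 : Matrix B B ℂ) := by
        push_cast
        rfl
      rw [e]
      exact psd_smul_real (by positivity) Matrix.PosSemidef.one
    · rw [Matrix.trace_smul, Matrix.trace_one, smul_eq_mul]
      rw [inv_mul_cancel₀]
      exact_mod_cast ne_of_gt hB0
    · have e1 : (1 : Matrix A A ℂ) ⊗ₖ (((Fintype.card B : ℂ))⁻¹ • (1 : Matrix B B ℂ))
          = ((Fintype.card B : ℂ))⁻¹ • (1 : Matrix (A × B) (A × B) ℂ) := by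
        rw [Matrix.kronecker_smul, Matrix.one_kronecker_one]
      have e2 : ((2 : ℝ) ^ (-(-Real.logb 2 (Fintype.card B))) : ℝ)
          = (Fintype.card B : ℝ) := by
        rw [neg_neg]
        exact Real.rpow_logb two_pos (by norm_num) hB0
      have e3 : ((2 : ℝ) ^ (-(-Real.logb 2 (Fintype.card B))))
          • ((1 : Matrix A A ℂ) ⊗ₖ (((Fintype.card B : ℂ))⁻¹ • (1 : Matrix B B ℂ)))
          = (1 : Matrix (A × B) (A × B) ℂ) := by
        rw [e1, real_smul_matrix, smul_smul, e2]
        push_cast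
        rw [mul_inv_cancel₀ (by exact_mod_cast ne_of_gt hB0 : (Fintype.card B : ℂ) ≠ 0)]
        rw [one_smul]
      show LoewnerLE ρ1 _
      rw [LoewnerLE, e3]
      exact psd_one_sub hsub1.1 hsub1.2
  rintro l ⟨σ1, hσ1, hL⟩
  -- key bound against any ρ2 in the β-ball
  have key : ∀ ρ2 : Matrix (A × B) (A × B) ℂ, IsSubState ρ2 → pDist ρ2 ρ ≤ Real.sin β →
      l - Real.logb 2 (1 / c ^ 2) ≤ Hmax ρ2 := by
    intro ρ2 hsub2 hpd2
    have hf2 : Real.cos β ≤ fid ρ2 ρ := cos_le_fid hsub2.1 hρpsd hρtre hcb hpd2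
    have htri := fid_triangle hρpsd hρtr hsub1.1 hsub1.2 hsub2.1 hsub2.2 hca hcb hf1 hf2
    have hsq1 : Real.sqrt (1 - Real.cos α ^ 2) = Real.sin α := by
      rw [show 1 - Real.cos α ^ 2 = Real.sin α ^ 2 from by
        nlinarith [Real.sin_sq_add_cos_sq α], Real.sqrt_sq hsa]
    have hsq2 : Real.sqrt (1 - Real.cos β ^ 2) = Real.sin β := by
      rw [show 1 - Real.cos β ^ 2 = Real.sin β ^ 2 from by
        nlinarith [Real.sin_sq_add_cos_sq β], Real.sqrt_sq hsb]
    have htri2 : c ≤ fid ρ1 ρ2 := by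
      rw [hcdef, Real.cos_add]
      rw [hsq1, hsq2] at htri
      linarith
    set X := ((2 : ℝ) ^ (-l)) • ((1 : Matrix A A ℂ) ⊗ₖ σ1) with hXdef
    rw [LoewnerLE] at hL
    have hXpsd : X.PosSemidef := by
      have h' := Matrix.PosSemidef.add hsub1.1 hL
      rwa [add_sub_cancel] at h'
    have hmono : fid ρ2 ρ1 ≤ fid ρ2 X := fid_mono hsub2.1 hsub1.1 hXpsd hL
    have hsymm : fid ρ1 ρ2 = fid ρ2 ρ1 := fid_symm hsub1.1 hsub2.1
    have hkps : ((1 : Matrix A A ℂ) ⊗ₖ σ1).PosSemidef := kron_one_psd hσ1.1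
    have hscale : fid ρ2 X
        = Real.sqrt ((2 : ℝ) ^ (-l)) * fid ρ2 ((1 : Matrix A A ℂ) ⊗ₖ σ1) := by
      rw [hXdef, real_smul_matrix]
      exact fid_smul hsub2.1 hkps (Real.rpow_nonneg (by norm_num) _)
    set F2 := fid ρ2 ((1 : Matrix A A ℂ) ⊗ₖ σ1) with hF2def
    have hchain : c ≤ (2 : ℝ) ^ (-(l / 2)) * F2 := by
      rw [← sqrt_rpow_two]
      calc c ≤ fid ρ1 ρ2 := htri2
        _ = fid ρ2 ρ1 := hsymm
        _ ≤ fid ρ2 X := hmono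
        _ = Real.sqrt ((2 : ℝ) ^ (-l)) * F2 := hscale
    have hpowpos : (0 : ℝ) < (2 : ℝ) ^ (l / 2) := Real.rpow_pos_of_pos two_pos _
    have hF2lb : c * (2 : ℝ) ^ (l / 2) ≤ F2 := by
      have h2 := mul_le_mul_of_nonneg_left hchain (le_of_lt hpowpos)
      rw [← mul_assoc, ← Real.rpow_add two_pos] at h2
      have e : l / 2 + -(l / 2) = 0 := by ring
      rw [e, Real.rpow_zero, one_mul] at h2
      linarith
    have hbdd : BddAbove {f : ℝ | ∃ σ : Matrix B B ℂ, IsState σ ∧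
        f = fid ρ2 ((1 : Matrix A A ℂ) ⊗ₖ σ)} := by
      refine ⟨Real.sqrt (Fintype.card A), ?_⟩
      rintro f ⟨σ, hσst, rfl⟩
      have h1 := fid_le_sqrt_trace hsub2.1 (kron_one_psd hσst.1)
      have htr : ((1 : Matrix A A ℂ) ⊗ₖ σ).trace.re = (Fintype.card A : ℝ) := by
        rw [Matrix.trace_kronecker, Matrix.trace_one, hσst.2, mul_one]
        simp
      calc fid ρ2 ((1 : Matrix A A ℂ) ⊗ₖ σ)
          ≤ Real.sqrt (((1 : Matrix A A ℂ) ⊗ₖ σ).trace.re) * Real.sqrt (ρ2.trace.re) := h1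
        _ ≤ Real.sqrt (Fintype.card A) * 1 := by
            rw [htr]
            exact mul_le_mul_of_nonneg_left (Real.sqrt_le_one.mpr hsub2.2)
              (Real.sqrt_nonneg _)
        _ = Real.sqrt (Fintype.card A) := mul_one _
    have hmem : F2 ∈ {f : ℝ | ∃ σ : Matrix B B ℂ, IsState σ ∧
        f = fid ρ2 ((1 : Matrix A A ℂ) ⊗ₖ σ)} := ⟨σ1, hσ1, rfl⟩
    have hsup2 : c * (2 : ℝ) ^ (l / 2) ≤ sSup {f : ℝ | ∃ σ : Matrix B B ℂ, IsState σ ∧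
        f = fid ρ2 ((1 : Matrix A A ℂ) ⊗ₖ σ)} := le_trans hF2lb (le_csSup hbdd hmem)
    have hcl : 0 < c * (2 : ℝ) ^ (l / 2) := mul_pos hcab hpowpos
    have hlog := (Real.logb_le_logb one_lt_two hcl (lt_of_lt_of_le hcl hsup2)).mpr hsup2
    have hlog2 : Real.logb 2 (c * (2 : ℝ) ^ (l / 2)) = Real.logb 2 c + l / 2 := by
      rw [Real.logb_mul (ne_of_gt hcab) (ne_of_gt hpowpos),
        Real.logb_rpow two_pos (by norm_num)]
    have hinv : Real.logb 2 (1 / c ^ 2) = -(2 * Real.logb 2 c) := by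
      rw [one_div, Real.logb_inv, Real.logb_pow]
      push_cast
      ring
    rw [Hmax, hinv]
    rw [hlog2] at hlog
    linarith
  have h2 : l - Real.logb 2 (1 / c ^ 2) ≤ sHmax (Real.sin β) ρ := by
    apply le_csInf
    · exact ⟨Hmax ρ, ρ, hρsub, by rw [hself]; exact hsb, rfl⟩
    · rintro h3 ⟨ρ2, hsub2, hpd2, rfl⟩
      exact key ρ2 hsub2 hpd2
  linarith

end Paper
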